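/- Let G be a finite simple graph with vertex set V = {1,…,n}, edge set E, and stability number α(G), and let r ≥ 1. Then every Nullstellensatz certificate 1 = A·(−(α(G)+r) + Σ_{i=1}^n x_i) + Σ_{i∈V} Q_i·(x_i² − x_i) + Σ_{{i,j}∈E} Q_{ij}·x_i·x_j for the non-existence of a stable set of size α(G)+r has degree at least α(G), i.e., max{deg A, deg Q_i, deg Q_{ij}} ≥ α(G). -/

import Mathlib

open Finset MvPolynomial

/-- The edge set of `G`, as ordered pairs `(i, j)` with `i < j`. -/
def edgePairs {n : ℕ} (G : SimpleGraph (Fin n)) [DecidableRel G.Adj] :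
    Finset (Fin n × Fin n) :=
  Finset.univ.filter fun p => p.1 < p.2 ∧ G.Adj p.1 p.2

/-- A finset of vertices is stable (independent) if no two of its members are adjacent. -/
def IsStableSet {n : ℕ} (G : SimpleGraph (Fin n)) (S : Finset (Fin n)) : Prop :=
  ∀ i ∈ S, ∀ j ∈ S, ¬ G.Adj i j

/-- The stability number `α(G)`: the maximum size of a stable set of `G`. -/
def stabilityNumber {n : ℕ} (G : SimpleGraph (Fin n)) [DecidableRel G.Adj] : ℕ :=
  (Finset.univ.powerset.filter fun S => ∀ i ∈ S, ∀ j ∈ S, ¬ G.Adj i j).sup Finset.card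

/-- The Nullstellensatz certificate identity
`1 = A(−(α(G)+r) + Σ x_i) + Σ_i Q_i (x_i² − x_i) + Σ_{{i,j}∈E} Q_{ij} x_i x_j`
for the non-existence of a stable set of size `α(G) + r`. -/
def IsStableCert {n : ℕ} (G : SimpleGraph (Fin n)) [DecidableRel G.Adj] (r : ℕ)
    (A : MvPolynomial (Fin n) ℂ) (Q : Fin n → MvPolynomial (Fin n) ℂ)
    (Qe : Fin n × Fin n → MvPolynomial (Fin n) ℂ) : Prop :=
  (1 : MvPolynomial (Fin n) ℂ) =
    A * ((∑ i : Fin n, X i) - C ((stabilityNumber G + r : ℕ) : ℂ)) +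
    (∑ i : Fin n, Q i * (X i ^ 2 - X i)) +
    ∑ p ∈ edgePairs G, Qe p * (X p.1 * X p.2)

/-- The degree of a certificate: `max{deg A, deg Q_i, deg Q_{ij}}` (total degrees). -/
def stableCertDeg {n : ℕ} (G : SimpleGraph (Fin n)) [DecidableRel G.Adj]
    (A : MvPolynomial (Fin n) ℂ) (Q : Fin n → MvPolynomial (Fin n) ℂ)
    (Qe : Fin n × Fin n → MvPolynomial (Fin n) ℂ) : ℕ :=
  max A.totalDegree
    (max (Finset.univ.sup fun i => (Q i).totalDegree)
      ((edgePairs G).sup fun p => (Qe p).totalDegree))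

/-- A certificate is reduced when every monomial of `A` is square-free and its support
is a stable set of `G`. -/
def IsReducedCoeff {n : ℕ} (G : SimpleGraph (Fin n)) (A : MvPolynomial (Fin n) ℂ) : Prop :=
  ∀ m ∈ A.support, (∀ i : Fin n, m i ≤ 1) ∧ IsStableSet G m.support

/-- The square-free exponent vector `∏_{v ∈ S} x_v` associated with a finset `S`. -/
noncomputable def expOf {n : ℕ} (S : Finset (Fin n)) : Fin n →₀ ℕ :=
  ∑ v ∈ S, Finsupp.single v 1


private lemma alt_step (m : ℕ) (g : ℕ → ℂ) :
    ∑ k ∈ Finset.range (m+2), (-1:ℂ)^k * ((m+1).choose k) * g k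
      = ∑ k ∈ Finset.range (m+1), ((-1:ℂ)^k * (m.choose k) * g k
        - (-1:ℂ)^k * (m.choose k) * g (k+1)) := by
  rw [Finset.sum_range_succ' (fun k => (-1:ℂ)^k * ((m+1).choose k) * g k) (m+1)]
  rw [Finset.sum_sub_distrib]
  rw [Finset.sum_range_succ' (fun k => (-1:ℂ)^k * (m.choose k) * g k) m]
  have h3 : ∑ k ∈ Finset.range m, (-1:ℂ)^(k+1) * (m.choose (k+1)) * g (k+1)
      = ∑ k ∈ Finset.range (m+1), (-1:ℂ)^(k+1) * (m.choose (k+1)) * g (k+1) := by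
    rw [Finset.sum_range_succ]
    simp [Nat.choose_succ_self]
  have h4 : ∀ k ∈ Finset.range (m+1),
      (-1:ℂ)^(k+1) * (((m+1).choose (k+1) : ℕ) : ℂ) * g (k+1)
        = (-1:ℂ)^(k+1) * (m.choose (k+1)) * g (k+1)
            - (-1:ℂ)^k * (m.choose k) * g (k+1) := by
    intro k _
    rw [Nat.choose_succ_succ]
    push_cast
    ring
  try simp only at h3 ⊢
  rw [h3, Finset.sum_congr rfl h4, Finset.sum_sub_distrib]
  ring_nf
  simp only [Nat.choose_zero_right, Nat.cast_one]
  ring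

private lemma alt_inv_sum (m : ℕ) : ∀ c : ℕ, m < c →
    (∏ j ∈ Finset.range (m+1), ((c:ℂ) - j)) *
      (∑ k ∈ Finset.range (m+1), (-1:ℂ)^k * (m.choose k) * ((c:ℂ) - k)⁻¹)
      = (-1:ℂ)^m * (m.factorial) := by
  induction m with
  | zero =>
    intro c hc
    have hc0 : (c:ℂ) ≠ 0 := Nat.cast_ne_zero.mpr (by omega)
    simp [mul_inv_cancel₀ hc0]
  | succ m ih =>
    intro c hc
    have hc1 : 1 ≤ c := by omega
    have hmc : m < c := lt_trans (Nat.lt_succ_self m) hc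
    have hmc1 : m < c - 1 := by omega
    have hcast : ((c - 1 : ℕ) : ℂ) = (c : ℂ) - 1 := by
      push_cast [hc1]; ring
    -- nonvanishing of factors
    have hS : ∑ k ∈ Finset.range (m+1+1), (-1:ℂ)^k * ((m+1).choose k) * ((c:ℂ) - k)⁻¹
        = (∑ k ∈ Finset.range (m+1), (-1:ℂ)^k * (m.choose k) * ((c:ℂ) - k)⁻¹)
          - ∑ k ∈ Finset.range (m+1), (-1:ℂ)^k * (m.choose k) * (((c-1:ℕ):ℂ) - k)⁻¹ := by
      rw [alt_step m (fun k => ((c:ℂ) - k)⁻¹), Finset.sum_sub_distrib]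
      congr 1
      refine Finset.sum_congr rfl fun k _ => ?_
      have : ((c:ℂ) - ((k+1:ℕ):ℂ))⁻¹ = (((c-1:ℕ):ℂ) - (k:ℂ))⁻¹ := by
        congr 1
        push_cast [Nat.cast_sub hc1]
        ring
      simpa using congrArg (fun z => (-1:ℂ)^k * (m.choose k) * z) this
    set S1 := ∑ k ∈ Finset.range (m+1), (-1:ℂ)^k * (m.choose k) * ((c:ℂ) - k)⁻¹ with hS1def
    set S2 := ∑ k ∈ Finset.range (m+1), (-1:ℂ)^k * (m.choose k) * (((c-1:ℕ):ℂ) - k)⁻¹ with hS2def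
    set Pm := ∏ j ∈ Finset.range (m+1), ((c:ℂ) - j) with hPmdef
    set Pm' := ∏ j ∈ Finset.range (m+1), (((c-1:ℕ):ℂ) - j) with hPm'def
    have hP1 : ∏ j ∈ Finset.range (m+1+1), ((c:ℂ) - j)
        = Pm * ((c:ℂ) - ((m+1:ℕ):ℂ)) := Finset.prod_range_succ _ _
    have hP2 : ∏ j ∈ Finset.range (m+1+1), ((c:ℂ) - j) = (c:ℂ) * Pm' := by
      rw [Finset.prod_range_succ' (fun j => (c:ℂ) - (j:ℂ)) (m+1), mul_comm]
      congr 1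
      · simp
      · rw [hPm'def]
        refine Finset.prod_congr rfl fun j _ => ?_
        push_cast [Nat.cast_sub hc1]
        ring
    have ih1 := ih c hmc
    have ih2 := ih (c-1) hmc1
    rw [← hS1def] at ih1
    rw [← hS2def, ← hPm'def] at ih2
    rw [hS, Nat.factorial_succ]
    push_cast at hP1 ⊢
    linear_combination (S1 - S2) * hP2 + S1 * (hP1 - hP2) + ((c:ℂ) - ((m:ℂ)+1)) * ih1 - (c:ℂ) * ih2

private lemma alt_inv_sum_ne (m c : ℕ) (h : m < c) :
    ∑ k ∈ Finset.range (m+1), (-1:ℂ)^k * (m.choose k) * ((c:ℂ) - k)⁻¹ ≠ 0 := by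
  intro h0
  have hid := alt_inv_sum m c h
  rw [h0, mul_zero] at hid
  have hf : ((m.factorial : ℕ) : ℂ) ≠ 0 := Nat.cast_ne_zero.mpr m.factorial_ne_zero
  exact mul_ne_zero (pow_ne_zero _ (by norm_num : (-1:ℂ) ≠ 0)) hf hid.symm

private lemma prod_chi {n : ℕ} (S : Finset (Fin n)) (d : Fin n →₀ ℕ) :
    (∏ i ∈ d.support, (if i ∈ S then (1:ℂ) else 0) ^ d i)
      = if d.support ⊆ S then 1 else 0 := by
  by_cases h : d.support ⊆ S
  · rw [if_pos h]
    exact Finset.prod_eq_one fun i hi => by rw [if_pos (h hi), one_pow]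
  · rw [if_neg h]
    obtain ⟨i, hi, hiS⟩ := Finset.not_subset.mp h
    exact Finset.prod_eq_zero hi (by rw [if_neg hiS, zero_pow (Finsupp.mem_support_iff.mp hi)])

private lemma mobius_vanish {n : ℕ} (T : Finset (Fin n)) (A : MvPolynomial (Fin n) ℂ)
    (hdeg : A.totalDegree < T.card) :
    ∑ S ∈ T.powerset, (-1:ℂ)^S.card * eval (fun i => if i ∈ S then 1 else 0) A = 0 := by
  classical
  have heval : ∀ S : Finset (Fin n), eval (fun i => if i ∈ S then (1:ℂ) else 0) A
      = ∑ d ∈ A.support, A.coeff d * (if d.support ⊆ S then 1 else 0) := by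
    intro S
    rw [eval_eq]
    exact Finset.sum_congr rfl fun d _ => by rw [prod_chi]
  calc ∑ S ∈ T.powerset, (-1:ℂ)^S.card * eval (fun i => if i ∈ S then 1 else 0) A
      = ∑ d ∈ A.support, ∑ S ∈ T.powerset,
          (-1:ℂ)^S.card * (A.coeff d * (if d.support ⊆ S then 1 else 0)) := by
        simp_rw [heval, Finset.mul_sum]
        rw [Finset.sum_comm]
    _ = 0 := by
        apply Finset.sum_eq_zero
        intro d hd
        have hdT : d.support.card < T.card := by
          refine lt_of_le_of_lt (le_trans ?_ (MvPolynomial.le_totalDegree hd)) hdeg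
          rw [Finsupp.sum]
          calc d.support.card = ∑ _i ∈ d.support, 1 := by simp
            _ ≤ ∑ i ∈ d.support, d i :=
              Finset.sum_le_sum fun i hi =>
                Nat.one_le_iff_ne_zero.mpr (Finsupp.mem_support_iff.mp hi)
        by_cases hsub : d.support ⊆ T
        · have hne : (T \ d.support).Nonempty := by
            rw [← Finset.card_pos, Finset.card_sdiff_of_subset hsub]
            omega
          have hfilter : ∑ S ∈ T.powerset,
              (-1:ℂ)^S.card * (A.coeff d * (if d.support ⊆ S then 1 else 0))
              = ∑ S ∈ T.powerset.filter (fun S => d.support ⊆ S),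
                  (-1:ℂ)^S.card * A.coeff d := by
            rw [Finset.sum_filter]
            refine Finset.sum_congr rfl fun S _ => ?_
            by_cases h : d.support ⊆ S <;> simp [h]
          rw [hfilter]
          have hbij : ∑ S ∈ T.powerset.filter (fun S => d.support ⊆ S),
              (-1:ℂ)^S.card * A.coeff d
              = ∑ V ∈ (T \ d.support).powerset,
                  (-1:ℂ)^(V.card + d.support.card) * A.coeff d := by
            refine Finset.sum_nbij' (fun S => S \ d.support) (fun V => V ∪ d.support)
              ?_ ?_ ?_ ?_ ?_
            · intro S hS
              rw [Finset.mem_filter, Finset.mem_powerset] at hS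
              rw [Finset.mem_powerset]
              exact Finset.sdiff_subset_sdiff hS.1 le_rfl
            · intro V hV
              rw [Finset.mem_powerset] at hV
              rw [Finset.mem_filter, Finset.mem_powerset]
              refine ⟨Finset.union_subset (hV.trans Finset.sdiff_subset) hsub,
                Finset.subset_union_right⟩
            · intro S hS
              rw [Finset.mem_filter] at hS
              exact Finset.sdiff_union_of_subset hS.2
            · intro V hV
              rw [Finset.mem_powerset] at hV
              exact Finset.union_sdiff_cancel_right
                (Finset.sdiff_disjoint.mono_left hV)
            · intro S hS
              rw [Finset.mem_filter] at hS
              congr 2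
              rw [Finset.card_sdiff_add_card_eq_card hS.2]
          rw [hbij]
          have : ∑ V ∈ (T \ d.support).powerset,
              (-1:ℂ)^(V.card + d.support.card) * A.coeff d
              = ((-1:ℂ)^d.support.card * A.coeff d)
                  * ∑ V ∈ (T \ d.support).powerset, (-1:ℂ)^V.card := by
            rw [Finset.mul_sum]
            exact Finset.sum_congr rfl fun V _ => by rw [pow_add]; ring
          rw [this]
          have hz : ∑ V ∈ (T \ d.support).powerset, (-1:ℂ)^V.card = 0 := by
            have := Finset.sum_powerset_neg_one_pow_card_of_nonempty hne
            exact_mod_cast congrArg (Int.cast : ℤ → ℂ) this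
          rw [hz, mul_zero]
        · apply Finset.sum_eq_zero
          intro S hS
          rw [Finset.mem_powerset] at hS
          have : ¬ d.support ⊆ S := fun h => hsub (h.trans hS)
          rw [if_neg this, mul_zero, mul_zero]


private lemma eval_cert {n : ℕ} (G : SimpleGraph (Fin n)) [DecidableRel G.Adj] (r : ℕ)
    (A : MvPolynomial (Fin n) ℂ) (Q : Fin n → MvPolynomial (Fin n) ℂ)
    (Qe : Fin n × Fin n → MvPolynomial (Fin n) ℂ)
    (hcert : IsStableCert G r A Q Qe)
    (S : Finset (Fin n)) (hS : IsStableSet G S) :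
    eval (fun i => if i ∈ S then (1:ℂ) else 0) A
      * ((S.card : ℂ) - ((stabilityNumber G + r : ℕ) : ℂ)) = 1 := by
  classical
  have h := congrArg (eval (fun i => if i ∈ S then (1:ℂ) else 0)) hcert
  simp only [map_one, map_add, map_mul, map_sub, map_sum, map_pow, eval_C, eval_X] at h
  have hsum : ∑ i : Fin n, (if i ∈ S then (1:ℂ) else 0) = (S.card : ℂ) := by
    rw [Finset.sum_boole, Finset.filter_univ_mem]
  have hQ : ∀ i ∈ (Finset.univ : Finset (Fin n)),
      eval (fun i => if i ∈ S then (1:ℂ) else 0) (Q i) *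
        ((if i ∈ S then (1:ℂ) else 0) ^ 2 - (if i ∈ S then (1:ℂ) else 0)) = 0 := by
    intro i _
    by_cases hi : i ∈ S <;> simp [hi]
  have hE : ∀ p ∈ edgePairs G,
      eval (fun i => if i ∈ S then (1:ℂ) else 0) (Qe p) *
        ((if p.1 ∈ S then (1:ℂ) else 0) * (if p.2 ∈ S then (1:ℂ) else 0)) = 0 := by
    intro p hp
    rw [edgePairs, Finset.mem_filter] at hp
    by_cases h1 : p.1 ∈ S
    · have h2 : p.2 ∉ S := fun h2 => hS p.1 h1 p.2 h2 hp.2.2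
      simp [h2]
    · simp [h1]
  rw [Finset.sum_eq_zero hQ, Finset.sum_eq_zero hE, add_zero, add_zero, hsum] at h
  exact h.symm

/-- Every Nullstellensatz certificate for the non-existence of a stable
set of size `α(G) + r` (with `r ≥ 1`) has degree at least `α(G)`. -/
theorem stable_certificate_degree_lower_bound (n : ℕ) (G : SimpleGraph (Fin n))
    [DecidableRel G.Adj] (r : ℕ) (hr : 1 ≤ r)
    (A : MvPolynomial (Fin n) ℂ) (Q : Fin n → MvPolynomial (Fin n) ℂ)
    (Qe : Fin n × Fin n → MvPolynomial (Fin n) ℂ)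
    (hcert : IsStableCert G r A Q Qe) :
    stabilityNumber G ≤ stableCertDeg G A Q Qe := by
  classical
  by_contra hlt
  push_neg at hlt
  have hA : A.totalDegree < stabilityNumber G :=
    lt_of_le_of_lt (le_max_left _ _) hlt
  have hnonempty : ((Finset.univ : Finset (Fin n)).powerset.filter
      fun S => ∀ i ∈ S, ∀ j ∈ S, ¬ G.Adj i j).Nonempty :=
    ⟨∅, by simp⟩
  obtain ⟨T, hTmem, hTsup⟩ := Finset.exists_mem_eq_sup _ hnonempty Finset.card
  rw [Finset.mem_filter] at hTmem
  have hTstable : IsStableSet G T := hTmem.2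
  have hTcard : stabilityNumber G = T.card := hTsup
  set c : ℕ := stabilityNumber G + r with hc
  have hevalA : ∀ S ∈ T.powerset,
      eval (fun i => if i ∈ S then (1:ℂ) else 0) A = -(((c:ℂ) - S.card)⁻¹) := by
    intro S hSp
    rw [Finset.mem_powerset] at hSp
    have hSstable : IsStableSet G S := fun i hi j hj => hTstable i (hSp hi) j (hSp hj)
    have h := eval_cert G r A Q Qe hcert S hSstable
    have hclt : S.card < c := by
      have := Finset.card_le_card hSp
      omega
    have hnz : ((S.card : ℂ) - (c : ℂ)) ≠ 0 := by
      intro h0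
      have : ((S.card : ℕ) : ℂ) = ((c : ℕ) : ℂ) := by linear_combination h0
      exact absurd (Nat.cast_injective this) (by omega)
    have h3 := eq_inv_of_mul_eq_one_left h
    rw [← hc] at h3
    rw [h3, show ((S.card:ℂ) - (c:ℂ)) = -(((c:ℂ) - (S.card:ℂ))) by ring, inv_neg]
  have hzero := mobius_vanish T A (hTcard ▸ hA)
  have hzero2 : ∑ S ∈ T.powerset, (-1:ℂ)^S.card * (-(((c:ℂ) - S.card)⁻¹)) = 0 := by
    rw [← hzero]
    exact Finset.sum_congr rfl fun S hSp => by rw [hevalA S hSp]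
  have hrange := Finset.sum_powerset_apply_card
    (fun k => (-1:ℂ)^k * (-(((c:ℂ) - k)⁻¹))) (x := T)
  rw [hzero2] at hrange
  have hfinal : ∑ k ∈ Finset.range (T.card + 1),
      (-1:ℂ)^k * (T.card.choose k) * ((c:ℂ) - k)⁻¹ = 0 := by
    have : ∑ k ∈ Finset.range (T.card + 1),
        (-1:ℂ)^k * (T.card.choose k) * ((c:ℂ) - k)⁻¹
        = -∑ k ∈ Finset.range (T.card + 1),
            (T.card.choose k) • ((-1:ℂ)^k * (-(((c:ℂ) - k)⁻¹))) := by
      rw [← Finset.sum_neg_distrib]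
      refine Finset.sum_congr rfl fun k _ => ?_
      rw [nsmul_eq_mul]
      ring
    rw [this, ← hrange, neg_zero]
  exact alt_inv_sum_ne T.card c (by omega) hfinal
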